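/- Let P be an antichain on m elements and π = (k_1,...,k_m) a partition of N, with V = F_q^{k_1} × ... × F_q^{k_m} and d(u,v) = |{ i : u_i ≠ v_i }| the error-block metric. Then the number of linear isometries of (V,d) equals (∏_{i=1}^m ∏_{j=0}^{k_i - 1} (q^{k_i} - q^j)) · (∏_{j=1}^{l} m_j!), where m_1,...,m_l are the multiplicities of the distinct values among k_1,...,k_m. -/

import Mathlib

open Finset
set_option linter.unusedSectionVars false

/-- The error-block metric on `V = F_q^{k_1} × … × F_q^{k_m}`:
`d(u,v) = |{ i : u_i ≠ v_i }|`. -/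
def blockDist {F : Type*} [DecidableEq F] {m : ℕ} {k : Fin m → ℕ}
    (u v : ∀ i : Fin m, Fin (k i) → F) : ℕ :=
  (Finset.univ.filter fun i => u i ≠ v i).card

section Aux

variable {F : Type*} [Field F] [Fintype F] [DecidableEq F] {m : ℕ} {k : Fin m → ℕ}

/-- block support -/
def bsupp (u : ∀ i : Fin m, Fin (k i) → F) : Finset (Fin m) :=
  Finset.univ.filter fun i => u i ≠ 0

lemma mem_bsupp {u : ∀ i : Fin m, Fin (k i) → F} {i : Fin m} :
    i ∈ bsupp u ↔ u i ≠ 0 := by simp [bsupp]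

lemma blockDist_eq (u v : ∀ i : Fin m, Fin (k i) → F) :
    blockDist u v = (bsupp (u - v)).card := by
  unfold blockDist bsupp
  congr 1
  apply Finset.filter_congr
  intro i _
  simp [sub_ne_zero, Pi.sub_apply]

lemma single_eq_of_bsupp_subset {u : ∀ i : Fin m, Fin (k i) → F} {b : Fin m}
    (h : bsupp u ⊆ {b}) : u = Pi.single b (u b) := by
  funext i
  by_cases hib : i = b
  · subst hib; simp
  · have : i ∉ bsupp u := fun hi => hib (Finset.mem_singleton.mp (h hi))
    rw [mem_bsupp, not_not] at this
    rw [this, Pi.single_eq_of_ne hib]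

lemma bsupp_single_subset (b : Fin m) (x : Fin (k b) → F) :
    bsupp (Pi.single b x) ⊆ {b} := by
  intro i hi
  rw [mem_bsupp] at hi
  by_contra hib
  apply hi
  have hne : i ≠ b := Finset.notMem_singleton.mp hib
  simp [hne]

end Aux

section Phi

variable {F : Type*} [Field F] [Fintype F] [DecidableEq F] {m : ℕ} {k : Fin m → ℕ}

variable (F k) in
/-- the permutation-with-cast linear equivalence -/
def permLE (σ : Equiv.Perm (Fin m)) (hσ : ∀ i, k (σ i) = k i) :
    (∀ i : Fin m, Fin (k i) → F) ≃ₗ[F] (∀ i : Fin m, Fin (k i) → F) :=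
  (LinearEquiv.piCongrLeft' F (fun i => Fin (k i) → F) σ.symm).trans
    (LinearEquiv.piCongrRight fun i =>
      LinearEquiv.funCongrLeft F F (finCongr (hσ i)).symm)

variable (F k) in
/-- block-diagonal composed with permutation -/
def phiLE (σ : Equiv.Perm (Fin m)) (hσ : ∀ i, k (σ i) = k i)
    (A : ∀ i : Fin m, (Fin (k i) → F) ≃ₗ[F] (Fin (k i) → F)) :
    (∀ i : Fin m, Fin (k i) → F) ≃ₗ[F] (∀ i : Fin m, Fin (k i) → F) :=
  (permLE F k σ hσ).trans (LinearEquiv.piCongrRight A)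

lemma phiLE_apply (σ : Equiv.Perm (Fin m)) (hσ : ∀ i, k (σ i) = k i)
    (A : ∀ i : Fin m, (Fin (k i) → F) ≃ₗ[F] (Fin (k i) → F))
    (u : ∀ i : Fin m, Fin (k i) → F) (i : Fin m) :
    phiLE F k σ hσ A u i = A i (fun j => u (σ i) (Fin.cast (hσ i).symm j)) := rfl

end Phi

section Iso

variable {F : Type*} [Field F] [Fintype F] [DecidableEq F] {m : ℕ} {k : Fin m → ℕ}

lemma card_filter_comp (σ : Equiv.Perm (Fin m)) (P : Fin m → Prop) [DecidablePred P] :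
    (Finset.univ.filter fun i => P (σ i)).card = (Finset.univ.filter P).card := by
  apply Finset.card_bij (fun i _ => σ i)
  · intro a ha
    simp only [Finset.mem_filter, Finset.mem_univ, true_and] at *
    exact ha
  · intro a _ b _ h
    exact σ.injective h
  · intro b hb
    refine ⟨σ.symm b, ?_, σ.apply_symm_apply b⟩
    simp only [Finset.mem_filter, Finset.mem_univ, true_and, Equiv.apply_symm_apply] at *
    exact hb

lemma cast_arg_eq_iff {n n' : ℕ} (h : n' = n) (x y : Fin n' → F) :
    (fun j : Fin n => x (Fin.cast h.symm j)) = (fun j => y (Fin.cast h.symm j)) ↔ x = y := by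
  constructor
  · intro hxy
    funext j0
    exact congrFun hxy (Fin.cast h j0)
  · intro hxy
    rw [hxy]

lemma phiLE_isometry (σ : Equiv.Perm (Fin m)) (hσ : ∀ i, k (σ i) = k i)
    (A : ∀ i : Fin m, (Fin (k i) → F) ≃ₗ[F] (Fin (k i) → F))
    (u v : ∀ i : Fin m, Fin (k i) → F) :
    blockDist (phiLE F k σ hσ A u) (phiLE F k σ hσ A v) = blockDist u v := by
  unfold blockDist
  have h1 : ∀ i, (phiLE F k σ hσ A u i ≠ phiLE F k σ hσ A v i) ↔ u (σ i) ≠ v (σ i) := by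
    intro i
    rw [phiLE_apply, phiLE_apply, not_iff_not, (A i).injective.eq_iff,
      cast_arg_eq_iff (hσ i)]
  calc (Finset.univ.filter fun i => phiLE F k σ hσ A u i ≠ phiLE F k σ hσ A v i).card
      = (Finset.univ.filter fun i => u (σ i) ≠ v (σ i)).card := by
        congr 1
        apply Finset.filter_congr
        intro i _
        simp only [h1, eq_iff_iff]
    _ = (Finset.univ.filter fun i => u i ≠ v i).card :=
        card_filter_comp σ (fun i => u i ≠ v i)

end Iso

section Struct

variable {F : Type*} [Field F] [Fintype F] [DecidableEq F] {m : ℕ} {k : Fin m → ℕ}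

lemma hw_of_hT (T : (∀ i : Fin m, Fin (k i) → F) ≃ₗ[F] (∀ i : Fin m, Fin (k i) → F))
    (hT : ∀ u v, blockDist (T u) (T v) = blockDist u v) (u : ∀ i : Fin m, Fin (k i) → F) :
    (bsupp (T u)).card = (bsupp u).card := by
  have h := hT u 0
  rw [blockDist_eq, blockDist_eq, map_zero, sub_zero, sub_zero] at h
  exact h

lemma bsupp_single_eq {b : Fin m} {x : Fin (k b) → F} (hx : x ≠ 0) :
    bsupp (Pi.single b x) = {b} := by
  refine subset_antisymm (bsupp_single_subset b x) ?_
  rw [Finset.singleton_subset_iff, mem_bsupp, Pi.single_eq_same]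
  exact hx

lemma ones_ne_zero {b : Fin m} (hb : 0 < k b) :
    (fun _ => (1 : F) : Fin (k b) → F) ≠ 0 :=
  Function.ne_iff.mpr ⟨⟨0, hb⟩, one_ne_zero⟩

lemma inj_key (T : (∀ i : Fin m, Fin (k i) → F) ≃ₗ[F] (∀ i : Fin m, Fin (k i) → F))
    (b a : Fin m)
    (ha : ∀ x : Fin (k b) → F, x ≠ 0 → bsupp (T (Pi.single b x)) = {a}) :
    Function.Injective fun x : Fin (k b) → F => T (Pi.single b x) a := by
  have hsub : ∀ x : Fin (k b) → F, bsupp (T (Pi.single b x)) ⊆ {a} := by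
    intro x
    by_cases hx : x = 0
    · subst hx
      simp only [Pi.single_zero, map_zero]
      intro i hi
      rw [mem_bsupp] at hi
      exact absurd rfl hi
    · rw [ha x hx]
  intro x y hxy
  have h1 : T (Pi.single b x) = Pi.single a (T (Pi.single b x) a) :=
    single_eq_of_bsupp_subset (hsub x)
  have h2 : T (Pi.single b y) = Pi.single a (T (Pi.single b y) a) :=
    single_eq_of_bsupp_subset (hsub y)
  simp only at hxy
  have h3 : T (Pi.single b x) = T (Pi.single b y) := by
    rw [h1, h2, hxy]
  have h4 := T.injective h3
  have h5 := congrFun h4 b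
  simpa using h5

end Struct

section Main

variable {F : Type*} [Field F] [Fintype F] [DecidableEq F] {m : ℕ} {k : Fin m → ℕ}

lemma exists_param (hk : ∀ i, 0 < k i)
    (T : (∀ i : Fin m, Fin (k i) → F) ≃ₗ[F] (∀ i : Fin m, Fin (k i) → F))
    (hT : ∀ u v, blockDist (T u) (T v) = blockDist u v) :
    ∃ (σ : Equiv.Perm (Fin m)) (hσ : ∀ i, k (σ i) = k i)
      (A : ∀ i : Fin m, (Fin (k i) → F) ≃ₗ[F] (Fin (k i) → F)),
      phiLE F k σ hσ A = T := by
  classical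
  have hw := hw_of_hT T hT
  -- existence of the block map τ
  have hex : ∀ b : Fin m, ∃ a, ∀ x : Fin (k b) → F, x ≠ 0 →
      bsupp (T (Pi.single b x)) = {a} := by
    intro b
    have hcard : ∀ x : Fin (k b) → F, x ≠ 0 →
        (bsupp (T (Pi.single b x))).card = 1 := by
      intro x hx
      rw [hw, bsupp_single_eq hx, Finset.card_singleton]
    obtain ⟨a, ha⟩ := Finset.card_eq_one.mp (hcard _ (ones_ne_zero (hk b)))
    refine ⟨a, fun x hx => ?_⟩
    obtain ⟨a', ha'⟩ := Finset.card_eq_one.mp (hcard x hx)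
    rw [ha']
    by_contra hne'
    have hne : a' ≠ a := by
      intro h; exact hne' (by rw [h])
    set u := T (Pi.single b x) with hu
    set v := T (Pi.single b (fun _ => (1:F))) with hv
    have h1 : u a' ≠ 0 := mem_bsupp.mp (ha' ▸ Finset.mem_singleton_self a')
    have h2 : u a = 0 := by
      have : a ∉ bsupp u := by rw [ha']; simpa using hne.symm
      rwa [mem_bsupp, not_not] at this
    have h3 : v a ≠ 0 := mem_bsupp.mp (ha ▸ Finset.mem_singleton_self a)
    have h4 : v a' = 0 := by
      have : a' ∉ bsupp v := by rw [ha]; simpa using hne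
      rwa [mem_bsupp, not_not] at this
    have key : ({a, a'} : Finset (Fin m)) ⊆ bsupp (u + v) := by
      intro i hi
      rw [Finset.mem_insert, Finset.mem_singleton] at hi
      rw [mem_bsupp]
      rcases hi with rfl | rfl
      · simpa [Pi.add_apply, h2] using h3
      · simpa [Pi.add_apply, h4] using h1
    have hge : 2 ≤ (bsupp (u + v)).card := by
      calc 2 = ({a, a'} : Finset (Fin m)).card := (Finset.card_pair hne.symm).symm
        _ ≤ (bsupp (u + v)).card := Finset.card_le_card key
    have heq : u + v = T (Pi.single b (x + fun _ => (1:F))) := by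
      rw [Pi.single_add, map_add]
    have hle : (bsupp (u + v)).card ≤ 1 := by
      rw [heq, hw]
      calc (bsupp (Pi.single b (x + fun _ => (1:F)))).card
          ≤ ({b} : Finset (Fin m)).card := Finset.card_le_card (bsupp_single_subset _ _)
        _ = 1 := Finset.card_singleton b
    omega
  choose τ hτ using hex
  -- τ maps everything in block b into block τ b
  have hsub : ∀ (b : Fin m) (x : Fin (k b) → F),
      bsupp (T (Pi.single b x)) ⊆ {τ b} := by
    intro b x
    by_cases hx : x = 0
    · subst hx
      simp only [Pi.single_zero, map_zero]
      intro i hi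
      rw [mem_bsupp] at hi
      exact absurd rfl hi
    · rw [hτ b x hx]
  -- τ is injective
  have hinjτ : Function.Injective τ := by
    intro b b' hbb'
    by_contra hne
    set u := T (Pi.single b (fun _ => (1:F))) with hu
    set v := T (Pi.single b' (fun _ => (1:F))) with hv
    have hb1 : bsupp u = {τ b} := hτ b _ (ones_ne_zero (hk b))
    have hb2 : bsupp v = {τ b} := hbb' ▸ hτ b' _ (ones_ne_zero (hk b'))
    have hsub2 : bsupp (u + v) ⊆ {τ b} := by
      intro i hi
      rw [mem_bsupp] at hi
      by_contra hib
      have hiu : u i = 0 := by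
        have : i ∉ bsupp u := by rw [hb1]; exact hib
        rwa [mem_bsupp, not_not] at this
      have hiv : v i = 0 := by
        have : i ∉ bsupp v := by rw [hb2]; exact hib
        rwa [mem_bsupp, not_not] at this
      exact hi (by rw [Pi.add_apply, hiu, hiv, add_zero])
    have hle1 : (bsupp (u + v)).card ≤ 1 := by
      calc (bsupp (u + v)).card ≤ ({τ b} : Finset (Fin m)).card :=
            Finset.card_le_card hsub2
        _ = 1 := Finset.card_singleton _
    have heq : u + v = T (Pi.single b (fun _ => (1:F)) + Pi.single b' (fun _ => (1:F))) := by
      rw [map_add]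
    have hge : 2 ≤ (bsupp (u + v)).card := by
      rw [heq, hw]
      have hkey : ({b, b'} : Finset (Fin m)) ⊆
          bsupp (Pi.single b (fun _ => (1:F)) + Pi.single b' (fun _ => (1:F)) :
            ∀ i : Fin m, Fin (k i) → F) := by
        intro i hi
        rw [Finset.mem_insert, Finset.mem_singleton] at hi
        rw [mem_bsupp]
        rcases hi with rfl | rfl
        · rw [Pi.add_apply, Pi.single_eq_same, Pi.single_eq_of_ne hne, add_zero]
          exact ones_ne_zero (hk i)
        · rw [Pi.add_apply, Pi.single_eq_same, Pi.single_eq_of_ne (Ne.symm hne), zero_add]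
          exact ones_ne_zero (hk i)
      calc 2 = ({b, b'} : Finset (Fin m)).card := (Finset.card_pair hne).symm
        _ ≤ _ := Finset.card_le_card hkey
    omega
  have hbij : Function.Bijective τ := (Finite.injective_iff_bijective).mp hinjτ
  set e : Equiv.Perm (Fin m) := Equiv.ofBijective τ hbij with he
  -- dimension inequality
  have hle : ∀ b, k b ≤ k (τ b) := by
    intro b
    have hinj : Function.Injective
        ((LinearMap.proj (τ b)).comp (T.toLinearMap.comp
          (LinearMap.single F (fun i => Fin (k i) → F) b))) :=
      inj_key T b (τ b) (hτ b)
    have := LinearMap.finrank_le_finrank_of_injective hinj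
    simpa [Module.finrank_fintype_fun_eq_card] using this
  have keq : ∀ b, k (τ b) = k b := by
    have hsum : ∑ b, k b = ∑ b, k (τ b) := (hbij.sum_comp k).symm
    intro b
    exact ((Finset.sum_eq_sum_iff_of_le (fun i _ => hle i)).mp hsum b
      (Finset.mem_univ b)).symm
  set σ : Equiv.Perm (Fin m) := e.symm with hsd
  have hτσ : ∀ i, τ (σ i) = i := fun i => e.apply_symm_apply i
  have hσ : ∀ i, k (σ i) = k i := by
    intro i
    have := keq (σ i)
    rw [hτσ i] at this
    exact this.symm
  -- the block maps
  have hAinj : ∀ i, Function.Injective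
      ((LinearMap.proj i).comp (T.toLinearMap.comp
        ((LinearMap.single F (fun i => Fin (k i) → F) (σ i)).comp
          (LinearEquiv.funCongrLeft F F (finCongr (hσ i))).toLinearMap))) := by
    intro i
    have hbase : Function.Injective fun x : Fin (k (σ i)) → F =>
        T (Pi.single (σ i) x) i := by
      have := inj_key T (σ i) (τ (σ i)) (hτ (σ i))
      rwa [hτσ i] at this
    exact hbase.comp (LinearEquiv.funCongrLeft F F (finCongr (hσ i))).injective
  refine ⟨σ, hσ, fun i => LinearMap.linearEquivOfInjective _ (hAinj i) rfl, ?_⟩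
  apply LinearEquiv.toLinearMap_injective
  apply LinearMap.ext
  intro u
  funext i
  have hLHS : phiLE F k σ hσ
      (fun i => LinearMap.linearEquivOfInjective _ (hAinj i) rfl) u i =
      T (Pi.single (σ i) (u (σ i))) i := by
    rw [phiLE_apply, LinearMap.linearEquivOfInjective_apply]
    rfl
  have hRHS : T u i = T (Pi.single (σ i) (u (σ i))) i := by
    conv_lhs => rw [← Finset.univ_sum_single u]
    rw [map_sum, Finset.sum_apply]
    refine Finset.sum_eq_single (σ i) ?_ ?_
    · intro b _ hb
      have hib : i ∉ bsupp (T (Pi.single b (u b))) := by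
        intro hmem
        have := hsub b (u b) hmem
        rw [Finset.mem_singleton] at this
        apply hb
        apply hinjτ
        rw [hτσ i, this]
      rwa [mem_bsupp, not_not] at hib
    · intro h
      exact absurd (Finset.mem_univ _) h
  exact hLHS.trans hRHS.symm

end Main

section Inj

variable {F : Type*} [Field F] [Fintype F] [DecidableEq F] {m : ℕ} {k : Fin m → ℕ}

lemma phiLE_inj (hk : ∀ i, 0 < k i) (σ σ' : Equiv.Perm (Fin m))
    (hσ : ∀ i, k (σ i) = k i) (hσ' : ∀ i, k (σ' i) = k i)
    (A A' : ∀ i : Fin m, (Fin (k i) → F) ≃ₗ[F] (Fin (k i) → F))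
    (h : phiLE F k σ hσ A = phiLE F k σ' hσ' A') : σ = σ' ∧ A = A' := by
  have happ : ∀ u i, phiLE F k σ hσ A u i = phiLE F k σ' hσ' A' u i := by
    intro u i; rw [h]
  have hσσ' : σ = σ' := by
    apply Equiv.ext
    intro i
    by_contra hne
    set u : ∀ i : Fin m, Fin (k i) → F := Pi.single (σ i) (fun _ => (1:F)) with hu
    have h1 : phiLE F k σ hσ A u i ≠ 0 := by
      rw [phiLE_apply]
      have harg : (fun j : Fin (k i) => u (σ i) (Fin.cast (hσ i).symm j)) =
          fun _ => (1:F) := by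
        funext j
        rw [hu, Pi.single_eq_same]
      rw [harg]
      rw [LinearEquiv.map_ne_zero_iff]
      exact ones_ne_zero (hk i)
    have h2 : phiLE F k σ' hσ' A' u i = 0 := by
      rw [phiLE_apply]
      have harg : (fun j : Fin (k i) => u (σ' i) (Fin.cast (hσ' i).symm j)) = 0 := by
        have hz : u (σ' i) = 0 := Pi.single_eq_of_ne (Ne.symm hne) _
        funext j
        rw [hz]
        rfl
      rw [harg, map_zero]
    exact h1 ((happ u i).trans h2)
  subst hσσ'
  refine ⟨rfl, funext fun i => ?_⟩
  apply LinearEquiv.ext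
  intro x
  set u : ∀ i : Fin m, Fin (k i) → F :=
    Pi.single (σ i) (fun j' => x (Fin.cast (hσ i) j')) with hu
  have e1 : phiLE F k σ hσ A u i = A i x := by
    rw [phiLE_apply]
    congr 1
    funext j
    rw [hu, Pi.single_eq_same]
    exact congrArg x (Fin.ext rfl)
  have e2 : phiLE F k σ hσ' A' u i = A' i x := by
    rw [phiLE_apply]
    congr 1
    funext j
    rw [hu, Pi.single_eq_same]
    exact congrArg x (Fin.ext rfl)
  exact e1.symm.trans ((happ u i).trans e2)

end Inj

section Count

variable {F : Type*} [Field F] [Fintype F] [DecidableEq F] {m : ℕ} {k : Fin m → ℕ}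

lemma card_LE (n : ℕ) : Nat.card ((Fin n → F) ≃ₗ[F] (Fin n → F)) =
    ∏ j ∈ Finset.range n, (Fintype.card F ^ n - Fintype.card F ^ j) := by
  have e : GL (Fin n) F ≃ ((Fin n → F) ≃ₗ[F] (Fin n → F)) :=
    (Matrix.GeneralLinearGroup.toLin.trans
      (LinearMap.GeneralLinearGroup.generalLinearEquiv F (Fin n → F))).toEquiv
  rw [← Nat.card_congr e, Matrix.card_GL_field]
  exact Fin.prod_univ_eq_prod_range (fun j => Fintype.card F ^ n - Fintype.card F ^ j) n

lemma card_perm_fixing :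
    Nat.card {σ : Equiv.Perm (Fin m) // ∀ i, k (σ i) = k i} =
      ∏ c ∈ Finset.image k Finset.univ,
        Nat.factorial (Finset.univ.filter fun i => k i = c).card := by
  classical
  have hmem : ∀ i : Fin m, k i ∈ Finset.image k Finset.univ :=
    fun i => Finset.mem_image_of_mem k (Finset.mem_univ i)
  set β : {x // x ∈ Finset.image k Finset.univ} → Type _ :=
    fun c => Equiv.Perm {i : Fin m // k i = (c : ℕ)} with hβ
  -- decomposition of Fin m into fibers
  set D : Fin m ≃ Σ c : {x // x ∈ Finset.image k Finset.univ}, {i : Fin m // k i = (c : ℕ)} :=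
    ((Equiv.sigmaFiberEquiv
      (fun i : Fin m => (⟨k i, hmem i⟩ : {x // x ∈ Finset.image k Finset.univ}))).symm.trans
      (Equiv.sigmaCongrRight fun c =>
        Equiv.subtypeEquivRight fun i => Subtype.ext_iff)) with hD
  have E : {σ : Equiv.Perm (Fin m) // ∀ i, k (σ i) = k i} ≃ (∀ c, β c) :=
    { toFun := fun σp c => σp.1.subtypePerm (fun x => by rw [σp.2 x])
      invFun := fun f =>
        ⟨D.trans ((Equiv.sigmaCongrRight f).trans D.symm), by
          intro i
          have : (D.trans ((Equiv.sigmaCongrRight f).trans D.symm)) i =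
              (f ⟨k i, hmem i⟩ ⟨i, rfl⟩ : {j : Fin m // k j = k i}).1 := rfl
          rw [this]
          exact (f ⟨k i, hmem i⟩ ⟨i, rfl⟩).2⟩
      left_inv := by
        intro σp
        apply Subtype.ext
        apply Equiv.ext
        intro i
        rfl
      right_inv := by
        intro f
        funext c
        apply Equiv.ext
        intro x
        rcases c with ⟨c, hc⟩
        rcases x with ⟨x, hx⟩
        dsimp at hx
        subst hx
        rfl }
  rw [Nat.card_congr E, Nat.card_pi]
  rw [← Finset.prod_coe_sort (Finset.image k Finset.univ)
    (fun c => Nat.factorial (Finset.univ.filter fun i => k i = c).card)]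
  apply Finset.prod_congr rfl
  intro c _
  rw [hβ, Nat.card_eq_fintype_card, Fintype.card_perm, Fintype.card_subtype]

end Count

/-- The number of linear isometries of the error-block space equals
`(∏_i |GL(k_i, F_q)|) · (∏_j m_j!)`, where `|GL(k,F_q)| = ∏_{j<k}(q^k - q^j)` and the
`m_j` are the multiplicities of the distinct values among `k_1,…,k_m`. -/
theorem stmt17 {F : Type*} [Field F] [Fintype F] [DecidableEq F] {m N : ℕ}
    (k : Fin m → ℕ) (hk : ∀ i, 0 < k i) (hN : ∑ i, k i = N) :
    Nat.card {T : (∀ i : Fin m, Fin (k i) → F) ≃ₗ[F] (∀ i : Fin m, Fin (k i) → F) //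
        ∀ u v, blockDist (T u) (T v) = blockDist u v} =
      (∏ i : Fin m, ∏ j ∈ Finset.range (k i),
          ((Fintype.card F) ^ (k i) - (Fintype.card F) ^ j)) *
        ∏ c ∈ Finset.image k Finset.univ,
          Nat.factorial (Finset.univ.filter fun i => k i = c).card := by
  classical
  have hbij : Function.Bijective
      (fun p : {σ : Equiv.Perm (Fin m) // ∀ i, k (σ i) = k i} ×
          (∀ i : Fin m, (Fin (k i) → F) ≃ₗ[F] (Fin (k i) → F)) =>
        (⟨phiLE F k p.1.1 p.1.2 p.2, phiLE_isometry p.1.1 p.1.2 p.2⟩ :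
          {T : (∀ i : Fin m, Fin (k i) → F) ≃ₗ[F] (∀ i : Fin m, Fin (k i) → F) //
            ∀ u v, blockDist (T u) (T v) = blockDist u v})) := by
    constructor
    · rintro ⟨⟨σ, hσ1⟩, A⟩ ⟨⟨σ', hσ2⟩, A'⟩ hpq
      have h := Subtype.ext_iff.mp hpq
      simp only at h
      obtain ⟨hs, hA⟩ := phiLE_inj hk σ σ' hσ1 hσ2 A A' h
      subst hs
      subst hA
      rfl
    · rintro ⟨T, hT⟩
      obtain ⟨σ, hσ, A, hA⟩ := exists_param hk T hT
      exact ⟨⟨⟨σ, hσ⟩, A⟩, Subtype.ext hA⟩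
  rw [← Nat.card_congr (Equiv.ofBijective _ hbij), Nat.card_prod, card_perm_fixing,
    Nat.card_pi, mul_comm]
  congr 1
  apply Finset.prod_congr rfl
  intro i _
  exact card_LE (k i)
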